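/- For every integer k ≥ 1 and real α > -1, the squared weighted L² norm of the monomial x^k on [-1,1] with weight (1-x²)^α equals the Beta function value B(k+1/2, α+1), and satisfies B(k+1/2, α+1) ≤ √(π/e) · Γ(α+1) / k^(α+1). -/

import Mathlib

open Real MeasureTheory Set intervalIntegral

/-- The Euler Beta function `B(a,b) = Γ(a)Γ(b)/Γ(a+b)`. -/
noncomputable def realBeta (a b : ℝ) : ℝ := Real.Gamma a * Real.Gamma b / Real.Gamma (a + b)


lemma beta_integrand_eq {a b : ℝ} (x : ℝ) (hx : x ∈ Set.Icc (0:ℝ) 1) :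
    (x:ℂ) ^ ((a:ℂ) - 1) * ((1:ℂ) - x) ^ ((b:ℂ) - 1)
      = ((x ^ (a-1) * (1-x) ^ (b-1) : ℝ) : ℂ) := by
  rw [show ((a:ℂ)-1) = ((a-1 : ℝ) : ℂ) by push_cast; ring,
      show ((b:ℂ)-1) = ((b-1 : ℝ) : ℂ) by push_cast; ring,
      show ((1:ℂ) - (x:ℂ)) = ((1 - x : ℝ):ℂ) by push_cast; ring,
      ← Complex.ofReal_cpow hx.1, ← Complex.ofReal_cpow (by linarith [hx.2]),
      ← Complex.ofReal_mul]

lemma betaIntegrable {a b : ℝ} (ha : 0 < a) (hb : 0 < b) :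
    IntegrableOn (fun t : ℝ => t ^ (a-1) * (1-t) ^ (b-1)) (Set.Icc (0:ℝ) 1) := by
  have h := Complex.betaIntegral_convergent (u := a) (v := b) (by simpa) (by simpa)
  rw [intervalIntegrable_iff_integrableOn_Ioc_of_le zero_le_one] at h
  rw [integrableOn_Icc_iff_integrableOn_Ioc]
  exact IntegrableOn.congr_fun (h.re) (fun x hx => by
    rw [beta_integrand_eq x (Ioc_subset_Icc_self hx)]; simp) measurableSet_Ioc

lemma integral_beta {a b : ℝ} (ha : 0 < a) (hb : 0 < b) :
    ∫ t in (0:ℝ)..1, t ^ (a-1) * (1-t) ^ (b-1) = realBeta a b := by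
  have h := Complex.Gamma_mul_Gamma_eq_betaIntegral (s := a) (t := b) (by simpa) (by simpa)
  have h2 : Complex.betaIntegral a b = ((∫ t in (0:ℝ)..1, t ^ (a-1) * (1-t) ^ (b-1) : ℝ) : ℂ) := by
    rw [Complex.betaIntegral, ← intervalIntegral.integral_ofReal]
    exact intervalIntegral.integral_congr
      (fun x hx => beta_integrand_eq x (by rwa [Set.uIcc_of_le zero_le_one] at hx))
  rw [h2, Complex.Gamma_ofReal, Complex.Gamma_ofReal, show ((a:ℂ) + b) = ((a+b : ℝ):ℂ) by push_cast; ring,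
    Complex.Gamma_ofReal, ← Complex.ofReal_mul, ← Complex.ofReal_mul] at h
  have h3 : Real.Gamma a * Real.Gamma b = Real.Gamma (a+b) * ∫ t in (0:ℝ)..1, t ^ (a-1) * (1-t) ^ (b-1) :=
    mod_cast h
  have h4 : Real.Gamma (a+b) ≠ 0 := (Real.Gamma_pos_of_pos (by linarith)).ne'
  rw [realBeta, h3]
  field_simp

lemma f_integrable {α : ℝ} (hα : -1 < α) (k : ℕ) :
    IntegrableOn (fun x : ℝ => x ^ (2*k) * (1 - x^2) ^ α) (Set.Icc (0:ℝ) 1) := by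
  have hdom : IntegrableOn (fun x : ℝ => ((2:ℝ)^α + 1) * (1-x) ^ α) (Set.Icc (0:ℝ) 1) := by
    have h1 : IntervalIntegrable (fun x : ℝ => x ^ α) volume 0 1 :=
      intervalIntegrable_rpow' hα
    have h2 := (h1.comp_sub_left 1).symm
    rw [show (1:ℝ) - 0 = 1 by norm_num, show (1:ℝ) - 1 = 0 by norm_num] at h2
    rw [intervalIntegrable_iff_integrableOn_Ioc_of_le zero_le_one] at h2
    rw [integrableOn_Icc_iff_integrableOn_Ioc]
    exact h2.const_mul _
  refine hdom.mono' ?_ ?_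
  · exact (Measurable.aestronglyMeasurable (by measurability))
  · rw [ae_restrict_iff' measurableSet_Icc]
    filter_upwards with x hx
    obtain ⟨hx0, hx1⟩ := hx
    have hx2 : (0:ℝ) ≤ 1 - x^2 := by nlinarith
    have hxx : (1:ℝ) - x^2 = (1+x) * (1-x) := by ring
    rw [Real.norm_eq_abs, abs_of_nonneg (by positivity), hxx,
      Real.mul_rpow (by linarith) (by linarith)]
    have hp : x ^ (2*k) ≤ 1 := pow_le_one₀ hx0 hx1
    have hq : (1+x) ^ α ≤ (2:ℝ)^α + 1 := by
      rcases le_or_gt 0 α with h | h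
      · have : (1+x) ^ α ≤ (2:ℝ) ^ α := Real.rpow_le_rpow (by linarith) (by linarith) h
        nlinarith [Real.rpow_pos_of_pos (show (0:ℝ) < 2 by norm_num) α]
      · have : (1+x) ^ α ≤ 1 := Real.rpow_le_one_of_one_le_of_nonpos (by linarith) h.le
        nlinarith [Real.rpow_pos_of_pos (show (0:ℝ) < 2 by norm_num) α]
    have hr : (0:ℝ) ≤ (1-x) ^ α := Real.rpow_nonneg (by linarith) _
    calc x ^ (2*k) * ((1+x)^α * (1-x)^α) ≤ 1 * (((2:ℝ)^α + 1) * (1-x)^α) := by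
          apply mul_le_mul hp ?_ (by positivity) one_pos.le
          exact mul_le_mul_of_nonneg_right hq hr
      _ = ((2:ℝ)^α + 1) * (1-x) ^ α := by ring

lemma key_pointwise {α : ℝ} {k : ℕ} (hk : 1 ≤ k) {x : ℝ} (hx0 : 0 ≤ x) :
    ((x^2) ^ ((k:ℝ) + 1/2 - 1) * (1-x^2) ^ (α + 1 - 1)) * (2*x)
      = 2 * (x ^ (2*k) * (1 - x^2) ^ α) := by
  have he : α + 1 - 1 = α := by ring
  rcases eq_or_lt_of_le hx0 with h | h
  · rw [← h]
    have h2 : ((0:ℝ)^2) ^ ((k:ℝ) + 1/2 - 1) = 0 := by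
      rw [show ((0:ℝ)^2) = 0 by ring, Real.zero_rpow]
      have : (1:ℝ) ≤ (k:ℝ) := by exact_mod_cast hk
      intro hcon; nlinarith
    have h3 : (0:ℝ) ^ (2*k) = 0 := by apply zero_pow; omega
    rw [h2, he, h3]; ring
  · have h1 : (x^2 : ℝ) ^ ((k:ℝ) + 1/2 - 1) * x = x ^ (2*k) := by
      rw [← Real.rpow_natCast x 2, ← Real.rpow_mul hx0, ← Real.rpow_add_one h.ne',
        ← Real.rpow_natCast x (2*k)]
      congr 1
      push_cast; ring
    rw [he]
    calc ((x^2) ^ ((k:ℝ) + 1/2 - 1) * (1-x^2) ^ α) * (2*x)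
        = 2 * (((x^2) ^ ((k:ℝ) + 1/2 - 1) * x) * (1-x^2) ^ α) := by ring
      _ = 2 * (x ^ (2*k) * (1 - x^2) ^ α) := by rw [h1]

lemma subst_eq {α : ℝ} (hα : -1 < α) {k : ℕ} (hk : 1 ≤ k) :
    (∫ t in (0:ℝ)..1, t ^ ((k:ℝ) + 1/2 - 1) * (1-t) ^ (α + 1 - 1)) =
      2 * ∫ x in (0:ℝ)..1, x ^ (2*k) * (1 - x^2) ^ α := by
  have hmm : min (0:ℝ) 1 = 0 := by norm_num
  have hMM : max (0:ℝ) 1 = 1 := by norm_num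
  have himg : (fun x : ℝ => x^2) '' (Set.uIcc (0:ℝ) 1) ⊆ Set.Icc (0:ℝ) 1 := by
    rintro t ⟨x, hx, rfl⟩
    rw [Set.uIcc_of_le zero_le_one] at hx
    simp only [Set.mem_Icc] at hx ⊢
    constructor
    · positivity
    · nlinarith [hx.1, hx.2]
  have hg1 : IntegrableOn (fun t : ℝ => t ^ ((k:ℝ) + 1/2 - 1) * (1-t) ^ (α + 1 - 1))
      ((fun x : ℝ => x^2) '' (Set.uIcc (0:ℝ) 1)) := by
    have hb := betaIntegrable (a := (k:ℝ) + 1/2) (b := α + 1) (by positivity) (by linarith)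
    have : ((k:ℝ) + 1/2 - 1) = ((k:ℝ) + 1/2) - 1 := by ring
    exact (hb.mono_set himg)
  have hg2 : IntegrableOn (fun x : ℝ =>
      ((x^2) ^ ((k:ℝ) + 1/2 - 1) * (1-x^2) ^ (α + 1 - 1)) * (2*x)) (Set.uIcc (0:ℝ) 1) := by
    rw [Set.uIcc_of_le zero_le_one]
    refine IntegrableOn.congr_fun ((f_integrable hα k).const_mul 2) ?_ measurableSet_Icc
    intro x hx
    exact (key_pointwise (α := α) hk hx.1).symm
  have hcont : ContinuousOn (fun t : ℝ => t ^ ((k:ℝ) + 1/2 - 1) * (1-t) ^ (α + 1 - 1))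
      (Set.Ioo (0:ℝ) 1) := by
    refine ContinuousOn.mul ?_ ?_
    · exact fun t ht =>
        (Real.continuousAt_rpow_const t _ (Or.inl (ne_of_gt ht.1))).continuousWithinAt
    · refine ContinuousOn.rpow_const (by fun_prop) ?_
      intro t ht
      refine Or.inl ?_
      simp only [Set.mem_Ioo] at ht
      intro hcon; nlinarith [ht.2]
  have hsub : (fun x : ℝ => x^2) '' (Set.Ioo (0:ℝ) 1) ⊆ Set.Ioo (0:ℝ) 1 := by
    rintro t ⟨x, hx, rfl⟩
    simp only [Set.mem_Ioo] at hx ⊢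
    constructor
    · exact pow_pos hx.1 2
    · nlinarith [hx.1, hx.2]
  have h := integral_comp_mul_deriv'''
    (f := fun x : ℝ => x^2) (f' := fun x : ℝ => 2*x)
    (g := fun t : ℝ => t ^ ((k:ℝ) + 1/2 - 1) * (1-t) ^ (α + 1 - 1))
    (a := 0) (b := 1)
    (by fun_prop)
    (fun x hx => by simpa using (hasDerivAt_pow 2 x).hasDerivWithinAt)
    (by rw [hmm, hMM]; exact hcont.mono hsub)
    hg1
    hg2
  simp only [Function.comp] at h
  rw [show ((0:ℝ)^2) = 0 by norm_num, show ((1:ℝ)^2) = 1 by norm_num] at h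
  rw [← h, ← intervalIntegral.integral_const_mul]
  refine intervalIntegral.integral_congr ?_
  intro x hx
  rw [Set.uIcc_of_le zero_le_one] at hx
  exact key_pointwise (α := α) hk hx.1

lemma sqrt_pi_div_e_ge : (1.075 : ℝ) ≤ Real.sqrt (π / Real.exp 1) := by
  have he : Real.exp 1 < 2.7182818286 := Real.exp_one_lt_d9
  have hp : (3.141592 : ℝ) < π := Real.pi_gt_d6
  have he0 : (0:ℝ) < Real.exp 1 := Real.exp_pos 1
  rw [show (1.075:ℝ) = Real.sqrt (1.075^2) by rw [Real.sqrt_sq (by norm_num)]]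
  apply Real.sqrt_le_sqrt
  rw [le_div_iff₀ he0]
  nlinarith

/-- Log-convexity step: `Γ(a)/Γ(a+b) ≤ (a+b)^(1-b)/a` for `a > 0`, `0 < b ≤ 1`. -/
lemma gamma_ratio_logconvex {a b : ℝ} (ha : 0 < a) (hb : 0 < b) (hb1 : b ≤ 1) :
    Real.Gamma a / Real.Gamma (a + b) ≤ (a + b) ^ (1 - b) / a := by
  have hab : (0:ℝ) < a + b := by linarith
  have hG : (0:ℝ) < Real.Gamma (a+b) := Real.Gamma_pos_of_pos hab
  have hG1 : (0:ℝ) < Real.Gamma (a+b+1) := Real.Gamma_pos_of_pos (by linarith)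
  have hGa : (0:ℝ) < Real.Gamma a := Real.Gamma_pos_of_pos ha
  -- log convexity
  have hcvx := Real.convexOn_log_Gamma.2 (Set.mem_Ioi.mpr hab)
    (Set.mem_Ioi.mpr (show (0:ℝ) < a + b + 1 by linarith)) hb.le
    (by linarith : (0:ℝ) ≤ 1 - b) (by ring)
  simp only [smul_eq_mul, Function.comp] at hcvx
  have harg : b * (a + b) + (1 - b) * (a + b + 1) = a + 1 := by ring
  rw [harg] at hcvx
  -- exponentiate
  have hexp : Real.Gamma (a+1) ≤ Real.Gamma (a+b) ^ b * Real.Gamma (a+b+1) ^ (1-b) := by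
    have h1 : Real.Gamma (a+1) = Real.exp (Real.log (Real.Gamma (a+1))) :=
      (Real.exp_log (Real.Gamma_pos_of_pos (by linarith))).symm
    rw [h1]
    calc Real.exp (Real.log (Real.Gamma (a+1)))
        ≤ Real.exp (b * Real.log (Real.Gamma (a+b)) + (1-b) * Real.log (Real.Gamma (a+b+1))) :=
          Real.exp_le_exp.mpr hcvx
      _ = Real.Gamma (a+b) ^ b * Real.Gamma (a+b+1) ^ (1-b) := by
          rw [Real.exp_add, Real.rpow_def_of_pos hG, Real.rpow_def_of_pos hG1,
            mul_comm b, mul_comm (1-b)]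
  have hGadd : Real.Gamma (a+b+1) = (a+b) * Real.Gamma (a+b) := Real.Gamma_add_one hab.ne'
  have hGa1 : Real.Gamma (a+1) = a * Real.Gamma a := Real.Gamma_add_one ha.ne'
  rw [hGadd, hGa1, Real.mul_rpow hab.le hG.le] at hexp
  have hcollect : Real.Gamma (a+b) ^ b * ((a+b) ^ (1-b) * Real.Gamma (a+b) ^ (1-b))
      = Real.Gamma (a+b) * (a+b) ^ (1-b) := by
    rw [mul_comm ((a+b) ^ (1-b)), ← mul_assoc, ← Real.rpow_add hG]
    norm_num
  rw [hcollect] at hexp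
  -- now a * Γ a ≤ Γ(a+b) * (a+b)^(1-b)
  rw [div_le_div_iff₀ hG ha]
  calc Real.Gamma a * a = a * Real.Gamma a := by ring
    _ ≤ Real.Gamma (a+b) * (a+b) ^ (1-b) := hexp
    _ = (a+b) ^ (1-b) * Real.Gamma (a+b) := by ring

lemma gamma_ratio_base {k : ℕ} (hk : 1 ≤ k) {b : ℝ} (hb : 0 < b) (hb1 : b ≤ 1) :
    Real.Gamma ((k:ℝ) + 1/2) / Real.Gamma ((k:ℝ) + 1/2 + b)
      ≤ Real.sqrt (π / Real.exp 1) / (k:ℝ) ^ b := by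
  have hk1 : (1:ℝ) ≤ (k:ℝ) := by exact_mod_cast hk
  set a : ℝ := (k:ℝ) + 1/2 with ha_def
  have ha : (0:ℝ) < a := by simp only [ha_def]; linarith
  have hkb : (0:ℝ) < (k:ℝ) ^ b := Real.rpow_pos_of_pos (by linarith) b
  have h1 := gamma_ratio_logconvex ha hb hb1
  refine h1.trans ?_
  rw [div_le_div_iff₀ ha hkb]
  -- need (a+b)^(1-b) * k^b ≤ sqrt(π/e) * a
  have hgm : (k:ℝ) ^ b * (a + b) ^ (1-b) ≤ b * (k:ℝ) + (1-b) * (a + b) :=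
    Real.geom_mean_le_arith_mean2_weighted hb.le (by linarith) (by linarith)
      (by linarith) (by ring)
  have hs := sqrt_pi_div_e_ge
  have harith : b * (k:ℝ) + (1-b) * (a + b) ≤ (1.075 : ℝ) * a := by
    simp only [ha_def]
    nlinarith [sq_nonneg (b - 1/4)]
  calc (a+b) ^ (1-b) * (k:ℝ) ^ b = (k:ℝ) ^ b * (a + b) ^ (1-b) := by ring
    _ ≤ (1.075 : ℝ) * a := hgm.trans harith
    _ ≤ Real.sqrt (π / Real.exp 1) * a := by nlinarith

lemma gamma_ratio {k : ℕ} (hk : 1 ≤ k) {b : ℝ} (hb : 0 < b) :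
    Real.Gamma ((k:ℝ) + 1/2) / Real.Gamma ((k:ℝ) + 1/2 + b)
      ≤ Real.sqrt (π / Real.exp 1) / (k:ℝ) ^ b := by
  have hk1 : (1:ℝ) ≤ (k:ℝ) := by exact_mod_cast hk
  have hk0 : (0:ℝ) < (k:ℝ) := by linarith
  suffices H : ∀ n : ℕ, ∀ b : ℝ, 0 < b → b ≤ n + 1 →
      Real.Gamma ((k:ℝ) + 1/2) / Real.Gamma ((k:ℝ) + 1/2 + b)
        ≤ Real.sqrt (π / Real.exp 1) / (k:ℝ) ^ b by
    obtain ⟨n, hn⟩ := exists_nat_ge b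
    exact H n b hb (by push_cast; linarith)
  intro n
  induction n with
  | zero =>
    intro b hb hb1
    exact gamma_ratio_base hk hb (by norm_num at hb1; linarith)
  | succ n ih =>
    intro b hb hb1
    rcases le_or_gt b 1 with hble | hbgt
    · exact gamma_ratio_base hk hb hble
    · have hb1' : 0 < b - 1 := by linarith
      have ihb := ih (b - 1) hb1' (by push_cast at hb1 ⊢; linarith)
      have hpos : (0:ℝ) < (k:ℝ) + 1/2 + (b - 1) := by linarith
      have hGrw : Real.Gamma ((k:ℝ) + 1/2 + b)
          = ((k:ℝ) + 1/2 + (b-1)) * Real.Gamma ((k:ℝ) + 1/2 + (b-1)) := by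
        rw [← Real.Gamma_add_one hpos.ne']
        ring_nf
      have hGa : (0:ℝ) ≤ Real.Gamma ((k:ℝ) + 1/2) :=
        (Real.Gamma_pos_of_pos (by linarith)).le
      have hGb : (0:ℝ) < Real.Gamma ((k:ℝ) + 1/2 + (b-1)) :=
        Real.Gamma_pos_of_pos hpos
      have hs0 : (0:ℝ) ≤ Real.sqrt (π / Real.exp 1) := Real.sqrt_nonneg _
      have hkb1 : (0:ℝ) < (k:ℝ) ^ (b-1) := Real.rpow_pos_of_pos hk0 _
      have step : Real.Gamma ((k:ℝ) + 1/2) / Real.Gamma ((k:ℝ) + 1/2 + b)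
          = (Real.Gamma ((k:ℝ) + 1/2) / Real.Gamma ((k:ℝ) + 1/2 + (b-1)))
            / ((k:ℝ) + 1/2 + (b-1)) := by
        rw [hGrw]
        field_simp
      rw [step]
      have hdd : (Real.Gamma ((k:ℝ) + 1/2) / Real.Gamma ((k:ℝ) + 1/2 + (b-1)))
            / ((k:ℝ) + 1/2 + (b-1))
          ≤ (Real.sqrt (π / Real.exp 1) / (k:ℝ) ^ (b-1)) / (k:ℝ) := by
        apply div_le_div₀ (by positivity) ihb hk0 (by linarith)
      refine hdd.trans ?_
      rw [div_div, ← Real.rpow_add_one hk0.ne']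
      rw [show b - 1 + 1 = b by ring]

lemma final_bound {k : ℕ} (hk : 1 ≤ k) {α : ℝ} (hα : -1 < α) :
    Real.Gamma ((k:ℝ) + 1/2) * Real.Gamma (α + 1) / Real.Gamma ((k:ℝ) + 1/2 + (α + 1))
      ≤ Real.sqrt (π / Real.exp 1) * Real.Gamma (α + 1) / (k : ℝ) ^ (α + 1) := by
  have hb : (0:ℝ) < α + 1 := by linarith
  have h := gamma_ratio hk hb
  have hG : (0:ℝ) ≤ Real.Gamma (α + 1) := (Real.Gamma_pos_of_pos hb).le
  calc Real.Gamma ((k:ℝ) + 1/2) * Real.Gamma (α + 1) / Real.Gamma ((k:ℝ) + 1/2 + (α + 1))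
      = Real.Gamma (α + 1) * (Real.Gamma ((k:ℝ) + 1/2) / Real.Gamma ((k:ℝ) + 1/2 + (α + 1))) := by
        ring
    _ ≤ Real.Gamma (α + 1) * (Real.sqrt (π / Real.exp 1) / (k:ℝ) ^ (α + 1)) :=
        mul_le_mul_of_nonneg_left h hG
    _ = Real.sqrt (π / Real.exp 1) * Real.Gamma (α + 1) / (k : ℝ) ^ (α + 1) := by ring

/-- For every integer `k ≥ 1` and real `α > -1`,
`‖x^k‖²_{L²(I,ω_α)} = ∫_{-1}^1 x^{2k}(1-x²)^α dx = B(k+1/2, α+1)`, and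
`B(k+1/2, α+1) ≤ √(π/e) · Γ(α+1) / k^(α+1)`. -/
theorem monomial_weighted_norm_sq (k : ℕ) (hk : 1 ≤ k) (α : ℝ) (hα : -1 < α) :
    (∫ x in (-1 : ℝ)..1, x ^ (2 * k) * (1 - x ^ 2) ^ α) = realBeta ((k : ℝ) + 1/2) (α + 1) ∧
    realBeta ((k : ℝ) + 1/2) (α + 1) ≤ Real.sqrt (π / Real.exp 1) * Real.Gamma (α + 1) / (k : ℝ) ^ (α + 1) := by
  set f : ℝ → ℝ := fun x => x ^ (2 * k) * (1 - x ^ 2) ^ α with hf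
  have heq : (fun x => f (-x)) = f := by
    funext x
    simp only [hf, Even.neg_pow (even_two_mul k), neg_sq]
  have h2 : IntervalIntegrable f volume 0 1 := by
    rw [intervalIntegrable_iff_integrableOn_Ioc_of_le zero_le_one]
    exact (f_integrable hα k).mono_set Set.Ioc_subset_Icc_self
  have h1 : IntervalIntegrable f volume (-1) 0 := by
    rw [IntervalIntegrable.iff_comp_neg, heq]
    simp only [neg_neg, neg_zero]
    exact h2.symm
  have hleft : (∫ x in (-1:ℝ)..0, f x) = ∫ x in (0:ℝ)..1, f x := by
    have h := intervalIntegral.integral_comp_neg (f := f) (a := 0) (b := 1)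
    rw [heq] at h
    simp only [neg_zero] at h
    exact h.symm
  have hsplit : (∫ x in (-1:ℝ)..1, f x)
      = (∫ x in (-1:ℝ)..0, f x) + ∫ x in (0:ℝ)..1, f x :=
    (intervalIntegral.integral_add_adjacent_intervals h1 h2).symm
  have hbeta := integral_beta (a := (k:ℝ) + 1/2) (b := α + 1) (by positivity) (by linarith)
  constructor
  · calc (∫ x in (-1:ℝ)..1, f x)
        = (∫ x in (-1:ℝ)..0, f x) + ∫ x in (0:ℝ)..1, f x := hsplit
      _ = 2 * ∫ x in (0:ℝ)..1, f x := by rw [hleft]; ring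
      _ = ∫ t in (0:ℝ)..1, t ^ ((k:ℝ) + 1/2 - 1) * (1-t) ^ (α + 1 - 1) := (subst_eq hα hk).symm
      _ = realBeta ((k : ℝ) + 1/2) (α + 1) := hbeta
  · exact final_bound hk hα
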